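/- The revised call-by-need λ-calculus satisfies a Curry–Feys-style standard reduction theorem: if a term e reduces (by ↠, arbitrary reductions in arbitrary contexts) to an answer, then the standard reduction sequence of e — which always contracts the redex occurring in the hole of an evaluation context — also reaches an answer. -/

import Mathlib

namespace NeedCalc

/-- Terms of the pure λ-calculus, in de Bruijn representation (so that
    α-equivalent terms are syntactically equal). -/
inductive Tm : Type
  | bvar : Nat → Tm
  | lam  : Tm → Tm
  | app  : Tm → Tm → Tm
deriving DecidableEq

namespace Tm

/-- Shift the free de Bruijn indices ≥ k up by n. -/
def lift (n : Nat) : Nat → Tm → Tm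
  | k, .bvar i => if i < k then .bvar i else .bvar (i + n)
  | k, .lam b => .lam (lift n (k+1) b)
  | k, .app f a => .app (lift n k f) (lift n k a)

/-- Capture-avoiding substitution of `s` for the de Bruijn index `k`. -/
def subst : Tm → Nat → Tm → Tm
  | .bvar i, k, s => if i = k then lift k 0 s else if k < i then .bvar (i-1) else .bvar i
  | .lam b, k, s => .lam (subst b (k+1) s)
  | .app f a, k, s => .app (subst f k s) (subst a k s)

end Tm

/-- Values V ::= λx.e. -/
def IsValT (t : Tm) : Prop := ∃ b, t = Tm.lam b

/-- Answers A ::= V | ((λx.A) e). -/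
inductive IsAnswer : Tm → Prop
  | lam (b : Tm) : IsAnswer (.lam b)
  | app {a : Tm} (e : Tm) : IsAnswer a → IsAnswer (.app (.lam a) e)

/-- Evaluation contexts
    E ::= □ | (E e) | ((λx.E₁[x]) E) | ((λx.E) e).
    In `appNeed B E` the context `B` is the body context whose hole is
    filled with the variable bound by the λ (de Bruijn index `B.depth`),
    and the overall hole is in the argument context `E`. -/
inductive ECtx : Type
  | hole    : ECtx
  | appL    : ECtx → Tm → ECtx
  | appNeed : ECtx → ECtx → ECtx
  | appBody : ECtx → Tm → ECtx

/-- Number of λ-binders crossed between the root of the context and its hole. -/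
def ECtx.depth : ECtx → Nat
  | .hole => 0
  | .appL E _ => E.depth
  | .appNeed _ E => E.depth
  | .appBody E _ => E.depth + 1

/-- Plugging a term into the hole of an evaluation context. -/
def ECtx.plug : ECtx → Tm → Tm
  | .hole, t => t
  | .appL E e, t => .app (E.plug t) e
  | .appNeed B E, t => .app (.lam (B.plug (.bvar B.depth))) (E.plug t)
  | .appBody E e, t => .app (.lam (E.plug t)) e

/-- The notions of reduction of the revised call-by-need λ-calculus:
    β_need, lift, and assoc. -/
inductive Redn : Tm → Tm → Prop
  | beta (E : ECtx) (b : Tm) :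
      Redn (.app (.lam (E.plug (.bvar E.depth))) (.lam b))
           (Tm.subst (E.plug (.bvar E.depth)) 0 (.lam b))
  | liftR {a : Tm} (e e' : Tm) : IsAnswer a →
      Redn (.app (.app (.lam a) e) e')
           (.app (.lam (.app a (Tm.lift 1 0 e'))) e)
  | assoc (E : ECtx) {a : Tm} (e : Tm) : IsAnswer a →
      Redn (.app (.lam (E.plug (.bvar E.depth))) (.app (.lam a) e))
           (.app (.lam (.app (Tm.lift 1 0 (.lam (E.plug (.bvar E.depth)))) a)) e)

/-- One-step reduction: the compatible (contextual) closure of the notions of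
    reduction. -/
inductive Red1 : Tm → Tm → Prop
  | base {t t' : Tm} : Redn t t' → Red1 t t'
  | lam {b b' : Tm} : Red1 b b' → Red1 (.lam b) (.lam b')
  | appL {f f' : Tm} (a : Tm) : Red1 f f' → Red1 (.app f a) (.app f' a)
  | appR (f : Tm) {a a' : Tm} : Red1 a a' → Red1 (.app f a) (.app f a')

/-- Reflexive-transitive closure of one-step reduction. -/
def Reds : Tm → Tm → Prop := Relation.ReflTransGen Red1

/-- Standard reduction: contract only the redex in the hole of an evaluation
    context. -/
inductive StdStep : Tm → Tm → Prop
  | mk (E : ECtx) (r r' : Tm) : Redn r r' → StdStep (E.plug r) (E.plug r')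

end NeedCalc
namespace NeedCalc
open Tm

set_option linter.unusedVariables false

/-! ### Basic lift/subst arithmetic -/

/-- Count occurrences of de Bruijn index `j`. -/
def occ (j : Nat) : Tm → Nat
  | .bvar i => if i = j then 1 else 0
  | .lam b => occ (j+1) b
  | .app f a => occ j f + occ j a

theorem occ_lift_lt (t : Tm) : ∀ n k j, j < k → occ j (lift n k t) = occ j t := by
  induction t with
  | bvar i =>
    intro n k j h
    simp only [lift]
    split_ifs <;> simp only [occ] <;> split_ifs <;> omega
  | lam b ih =>
    intro n k j h
    simp only [lift, occ]
    exact ih n (k+1) (j+1) (by omega)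
  | app f a ihf iha =>
    intro n k j h
    simp only [lift, occ, ihf n k j h, iha n k j h]

theorem occ_lift_mid (t : Tm) : ∀ n k j, k ≤ j → j < k + n → occ j (lift n k t) = 0 := by
  induction t with
  | bvar i =>
    intro n k j h1 h2
    simp only [lift]
    split_ifs <;> simp only [occ] <;> split_ifs <;> omega
  | lam b ih =>
    intro n k j h1 h2
    simp only [lift, occ]
    exact ih n (k+1) (j+1) (by omega) (by omega)
  | app f a ihf iha =>
    intro n k j h1 h2
    simp only [lift, occ, ihf n k j h1 h2, iha n k j h1 h2]

theorem occ_lift_ge (t : Tm) : ∀ n k j, k ≤ j → occ (j + n) (lift n k t) = occ j t := by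
  induction t with
  | bvar i =>
    intro n k j h
    simp only [lift]
    split_ifs <;> simp only [occ] <;> split_ifs <;> omega
  | lam b ih =>
    intro n k j h
    simp only [lift, occ]
    have h1 : j + n + 1 = (j + 1) + n := by omega
    rw [h1]
    exact ih n (k+1) (j+1) (by omega)
  | app f a ihf iha =>
    intro n k j h
    simp only [lift, occ, ihf n k j h, iha n k j h]

/-- G1 -/
theorem lift_lift_fuse (t : Tm) : ∀ n m i j, i ≤ j → j ≤ i + m →
    lift n j (lift m i t) = lift (m+n) i t := by
  induction t with
  | bvar x =>
    intro n m i j h1 h2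
    simp only [lift]
    split_ifs <;> simp only [lift] <;> split_ifs <;>
      simp only [Tm.bvar.injEq] <;> omega
  | lam b ih =>
    intro n m i j h1 h2
    simp only [lift]
    rw [ih n m (i+1) (j+1) (by omega) (by omega)]
  | app f a ihf iha =>
    intro n m i j h1 h2
    simp only [lift]
    rw [ihf n m i j h1 h2, iha n m i j h1 h2]

/-- G2 -/
theorem lift_lift_comm (t : Tm) : ∀ n m i j, j ≤ i →
    lift n j (lift m i t) = lift m (i+n) (lift n j t) := by
  induction t with
  | bvar x =>
    intro n m i j h
    simp only [lift]
    split_ifs <;> simp only [lift] <;> split_ifs <;>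
      simp only [Tm.bvar.injEq] <;> omega
  | lam b ih =>
    intro n m i j h
    simp only [lift]
    rw [ih n m (i+1) (j+1) (by omega), Nat.add_right_comm i 1 n]
  | app f a ihf iha =>
    intro n m i j h
    simp only [lift]
    rw [ihf n m i j h, iha n m i j h]

end NeedCalc
namespace NeedCalc
open Tm

theorem lift_bvar_lt {i k : Nat} (n : Nat) (h : i < k) : lift n k (.bvar i) = .bvar i := by
  simp only [lift, if_pos h]

theorem lift_bvar_ge {i k : Nat} (n : Nat) (h : k ≤ i) : lift n k (.bvar i) = .bvar (i+n) := by
  simp only [lift, if_neg (by omega : ¬ i < k)]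

theorem subst_bvar_self (k : Nat) (s : Tm) : subst (.bvar k) k s = lift k 0 s := by
  simp [subst]

theorem subst_bvar_gt {i k : Nat} (s : Tm) (h : k < i) : subst (.bvar i) k s = .bvar (i-1) := by
  simp only [subst, if_neg (by omega : ¬ i = k), if_pos h]

theorem subst_bvar_lt {i k : Nat} (s : Tm) (h : i < k) : subst (.bvar i) k s = .bvar i := by
  simp only [subst, if_neg (by omega : ¬ i = k), if_neg (by omega : ¬ k < i)]

theorem occ_bvar_eq {i j : Nat} (h : i = j) : occ j (.bvar i) = 1 := by
  simp only [occ, if_pos h]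

theorem occ_bvar_ne {i j : Nat} (h : ¬ i = j) : occ j (.bvar i) = 0 := by
  simp only [occ, if_neg h]

/-- G3: substitution under a lift. -/
theorem subst_lift (X : Tm) : ∀ n k j C, k ≤ j →
    subst (lift n k X) (j + n) C = lift n k (subst X j C) := by
  induction X with
  | bvar m =>
    intro n k j C hkj
    by_cases h1 : m < k
    · rw [lift_bvar_lt n h1, subst_bvar_lt C (by omega), subst_bvar_lt C (by omega),
        lift_bvar_lt n h1]
    · rcases Nat.lt_trichotomy m j with h2 | h2 | h2
      · rw [lift_bvar_ge n (by omega), subst_bvar_lt C (by omega), subst_bvar_lt C (by omega),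
          lift_bvar_ge n (by omega)]
      · subst h2
        rw [lift_bvar_ge n (by omega), subst_bvar_self, subst_bvar_self,
          lift_lift_fuse C n m 0 k (by omega) (by omega)]
      · rw [lift_bvar_ge n (by omega), subst_bvar_gt C (by omega), subst_bvar_gt C (by omega),
          lift_bvar_ge n (by omega)]
        all_goals (congr 1 <;> omega)
  | lam b ih =>
    intro n k j C hkj
    simp only [lift, subst]
    rw [show j + n + 1 = (j + 1) + n by omega, ih n (k+1) (j+1) C (by omega)]
  | app f a ihf iha =>
    intro n k j C hkj
    simp only [lift, subst]
    rw [ihf n k j C hkj, iha n k j C hkj]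

/-- G4: lift of a substitution. -/
theorem lift_subst (A : Tm) : ∀ B n i k,
    lift n (i+k) (subst A i B) = subst (lift n (i+k+1) A) i (lift n k B) := by
  induction A with
  | bvar m =>
    intro B n i k
    rcases Nat.lt_trichotomy m i with h1 | h1 | h1
    · rw [subst_bvar_lt B h1, lift_bvar_lt n (by omega), lift_bvar_lt n (by omega),
        subst_bvar_lt _ h1]
    · subst h1
      rw [subst_bvar_self, lift_bvar_lt n (by omega), subst_bvar_self,
        lift_lift_comm B m n k 0 (by omega), Nat.add_comm k m]
    · by_cases h2 : m < i + k + 1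
      · rw [subst_bvar_gt B h1, lift_bvar_lt n (by omega), lift_bvar_lt n h2,
          subst_bvar_gt _ h1]
      · rw [subst_bvar_gt B h1, lift_bvar_ge n (by omega), lift_bvar_ge n (by omega),
          subst_bvar_gt _ (by omega)]
        all_goals (congr 1 <;> omega)
  | lam b ih =>
    intro B n i k
    simp only [subst, lift]
    rw [show i + k + 1 = (i + 1) + k by omega, ih B n (i+1) k]
  | app f a ihf iha =>
    intro B n i k
    simp only [subst, lift]
    rw [ihf B n i k, iha B n i k]

/-- G6: substituting into an over-lifted term. -/
theorem subst_lift_cancel (C : Tm) : ∀ X n k i, k ≤ i → i ≤ k + n →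
    subst (lift (n+1) k C) i X = lift n k C := by
  induction C with
  | bvar m =>
    intro X n k i h1 h2
    by_cases h3 : m < k
    · rw [lift_bvar_lt _ h3, subst_bvar_lt X (by omega), lift_bvar_lt n h3]
    · rw [lift_bvar_ge _ (by omega), subst_bvar_gt X (by omega), lift_bvar_ge n (by omega)]
      all_goals (congr 1 <;> omega)
  | lam b ih =>
    intro X n k i h1 h2
    simp only [lift, subst]
    rw [ih X n (k+1) (i+1) (by omega) (by omega)]
  | app f a ihf iha =>
    intro X n k i h1 h2
    simp only [lift, subst]
    rw [ihf X n k i h1 h2, iha X n k i h1 h2]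

/-- G5: substitution of a substitution. -/
theorem subst_subst (A : Tm) : ∀ B C i k,
    subst (subst A i B) (i+k) C = subst (subst A (i+k+1) C) i (subst B k C) := by
  induction A with
  | bvar m =>
    intro B C i k
    rcases Nat.lt_trichotomy m i with h1 | h1 | h1
    · rw [subst_bvar_lt B h1, subst_bvar_lt C (by omega), subst_bvar_lt C (by omega),
        subst_bvar_lt _ h1]
    · subst h1
      rw [subst_bvar_self, subst_bvar_lt C (by omega), subst_bvar_self]
      have := subst_lift B m 0 k C (by omega)
      rw [Nat.add_comm k m] at this
      exact this
    · rcases Nat.lt_trichotomy m (i+k+1) with h2 | h2 | h2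
      · rw [subst_bvar_gt B h1, subst_bvar_lt C (by omega), subst_bvar_lt C h2,
          subst_bvar_gt _ h1]
      · subst h2
        rw [subst_bvar_gt B h1, show i + k + 1 - 1 = i + k by omega, subst_bvar_self,
          subst_bvar_self, subst_lift_cancel C _ (i+k) 0 i (by omega) (by omega)]
      · rw [subst_bvar_gt B h1, subst_bvar_gt C (by omega), subst_bvar_gt C h2,
          subst_bvar_gt _ (by omega)]
        all_goals (congr 1 <;> omega)
  | lam b ih =>
    intro B C i k
    simp only [subst]
    rw [show i + k + 1 = (i + 1) + k by omega, ih B C (i+1) k]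
  | app f a ihf iha =>
    intro B C i k
    simp only [subst]
    rw [ihf B C i k, iha B C i k]

/-- O1h: occurrences below the substituted index are unchanged. -/
theorem occ_subst_lt (t : Tm) : ∀ u i j, j < i → occ j (subst t i u) = occ j t := by
  induction t with
  | bvar m =>
    intro u i j h
    rcases Nat.lt_trichotomy m i with h1 | h1 | h1
    · rw [subst_bvar_lt u h1]
    · subst h1
      rw [subst_bvar_self, occ_lift_mid u m 0 j (by omega) (by omega),
        occ_bvar_ne (by omega)]
    · rw [subst_bvar_gt u h1, occ_bvar_ne (by omega), occ_bvar_ne (by omega)]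
  | lam b ih =>
    intro u i j h
    simp only [subst, occ]
    exact ih u (i+1) (j+1) (by omega)
  | app f a ihf iha =>
    intro u i j h
    simp only [subst, occ, ihf u i j h, iha u i j h]

/-- O1g: occurrence counting through substitution. -/
theorem occ_subst (t : Tm) : ∀ u i k,
    occ (i + k) (subst t i u) = occ (i + k + 1) t + occ i t * occ k u := by
  induction t with
  | bvar m =>
    intro u i k
    rcases Nat.lt_trichotomy m i with h1 | h1 | h1
    · rw [subst_bvar_lt u h1, occ_bvar_ne (by omega), occ_bvar_ne (by omega),
        occ_bvar_ne (by omega)]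
      omega
    · subst h1
      have := occ_lift_ge u m 0 k (by omega)
      rw [Nat.add_comm k m] at this
      rw [subst_bvar_self, this, occ_bvar_ne (by omega), occ_bvar_eq rfl]
      omega
    · by_cases h2 : m = i + k + 1
      · subst h2
        rw [subst_bvar_gt u h1, occ_bvar_eq (by omega), occ_bvar_eq rfl,
          occ_bvar_ne (by omega)]
        omega
      · rw [subst_bvar_gt u h1, occ_bvar_ne (by omega), occ_bvar_ne (by omega),
          occ_bvar_ne (by omega)]
        omega
  | lam b ih =>
    intro u i k
    simp only [subst, occ]
    rw [show i + k + 1 = (i + 1) + k by omega]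
    have := ih u (i+1) k
    omega
  | app f a ihf iha =>
    intro u i k
    simp only [subst, occ]
    rw [ihf u i k, iha u i k]
    ring

end NeedCalc
namespace NeedCalc
open Tm

/-! ### Evaluation context machinery -/

def ECtx.liftC (n : Nat) : Nat → ECtx → ECtx
  | k, .hole => .hole
  | k, .appL E e => .appL (ECtx.liftC n k E) (Tm.lift n k e)
  | k, .appNeed B E => .appNeed (ECtx.liftC n (k+1) B) (ECtx.liftC n k E)
  | k, .appBody E e => .appBody (ECtx.liftC n (k+1) E) (Tm.lift n k e)

def ECtx.substC (u : Tm) : Nat → ECtx → ECtx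
  | k, .hole => .hole
  | k, .appL E e => .appL (ECtx.substC u k E) (Tm.subst e k u)
  | k, .appNeed B E => .appNeed (ECtx.substC u (k+1) B) (ECtx.substC u k E)
  | k, .appBody E e => .appBody (ECtx.substC u (k+1) E) (Tm.subst e k u)

@[simp] theorem ECtx.depth_liftC (E : ECtx) : ∀ n k, (ECtx.liftC n k E).depth = E.depth := by
  induction E with
  | hole => intro n k; rfl
  | appL E e ih => intro n k; simp only [ECtx.liftC, ECtx.depth, ih]
  | appNeed B E ihB ihE => intro n k; simp only [ECtx.liftC, ECtx.depth, ihE]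
  | appBody E e ih => intro n k; simp only [ECtx.liftC, ECtx.depth, ih]

@[simp] theorem ECtx.depth_substC (E : ECtx) : ∀ u k, (ECtx.substC u k E).depth = E.depth := by
  induction E with
  | hole => intro u k; rfl
  | appL E e ih => intro u k; simp only [ECtx.substC, ECtx.depth, ih]
  | appNeed B E ihB ihE => intro u k; simp only [ECtx.substC, ECtx.depth, ihE]
  | appBody E e ih => intro u k; simp only [ECtx.substC, ECtx.depth, ih]

theorem ECtx.plug_liftC (E : ECtx) : ∀ t n k,
    Tm.lift n k (E.plug t) = (ECtx.liftC n k E).plug (Tm.lift n (k + E.depth) t) := by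
  induction E with
  | hole =>
    intro t n k
    simp only [ECtx.plug, ECtx.liftC, ECtx.depth, Nat.add_zero]
  | appL E e ih =>
    intro t n k
    simp only [ECtx.plug, ECtx.liftC, ECtx.depth, Tm.lift, ih]
  | appNeed B E ihB ihE =>
    intro t n k
    simp only [ECtx.plug, ECtx.liftC, ECtx.depth, Tm.lift]
    congr 2
    · rw [ihB (Tm.bvar B.depth) n (k+1)]
      rw [lift_bvar_lt n (by omega), ECtx.depth_liftC]
    · rw [ihE t n k]
  | appBody E e ih =>
    intro t n k
    simp only [ECtx.plug, ECtx.liftC, ECtx.depth, Tm.lift, ih]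
    rw [show k + (E.depth + 1) = (k + 1) + E.depth by omega]

theorem ECtx.plug_substC (E : ECtx) : ∀ t u k,
    Tm.subst (E.plug t) k u = (ECtx.substC u k E).plug (Tm.subst t (k + E.depth) u) := by
  induction E with
  | hole =>
    intro t u k
    simp only [ECtx.plug, ECtx.substC, ECtx.depth, Nat.add_zero]
  | appL E e ih =>
    intro t u k
    simp only [ECtx.plug, ECtx.substC, ECtx.depth, Tm.subst, ih]
  | appNeed B E ihB ihE =>
    intro t u k
    simp only [ECtx.plug, ECtx.substC, ECtx.depth, Tm.subst]
    congr 2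
    · rw [ihB (Tm.bvar B.depth) u (k+1)]
      rw [subst_bvar_lt u (by omega), ECtx.depth_substC]
    · rw [ihE t u k]
  | appBody E e ih =>
    intro t u k
    simp only [ECtx.plug, ECtx.substC, ECtx.depth, Tm.subst, ih]
    rw [show k + (E.depth + 1) = (k + 1) + E.depth by omega]

/-- The "needed" terms `E[x]`. -/
def Needed (t : Tm) : Prop := ∃ E : ECtx, t = E.plug (.bvar E.depth)

theorem Needed.lift {t : Tm} (h : Needed t) (n k : Nat) : Needed (Tm.lift n (k+1) t) := by
  obtain ⟨E, rfl⟩ := h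
  refine ⟨ECtx.liftC n (k+1) E, ?_⟩
  rw [ECtx.plug_liftC E (Tm.bvar E.depth) n (k+1),
    lift_bvar_lt n (by omega), ECtx.depth_liftC]

theorem Needed.subst {t : Tm} (h : Needed t) (u : Tm) (k : Nat) :
    Needed (Tm.subst t (k+1) u) := by
  obtain ⟨E, rfl⟩ := h
  refine ⟨ECtx.substC u (k+1) E, ?_⟩
  rw [ECtx.plug_substC E (Tm.bvar E.depth) u (k+1),
    subst_bvar_lt u (by omega), ECtx.depth_substC]

def ECtx.comp : ECtx → ECtx → ECtx
  | .hole, D => D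
  | .appL E e, D => .appL (ECtx.comp E D) e
  | .appNeed B E, D => .appNeed B (ECtx.comp E D)
  | .appBody E e, D => .appBody (ECtx.comp E D) e

theorem ECtx.plug_comp (C D : ECtx) (t : Tm) :
    (ECtx.comp C D).plug t = C.plug (D.plug t) := by
  induction C with
  | hole => rfl
  | appL E e ih => simp only [ECtx.comp, ECtx.plug, ih]
  | appNeed B E ihB ihE => simp only [ECtx.comp, ECtx.plug, ihE]
  | appBody E e ih => simp only [ECtx.comp, ECtx.plug, ih]

theorem StdStep.ctx (C : ECtx) {t t' : Tm} (h : StdStep t t') :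
    StdStep (C.plug t) (C.plug t') := by
  cases h with
  | mk E r r' hr =>
    rw [← ECtx.plug_comp C E r, ← ECtx.plug_comp C E r']
    exact StdStep.mk _ r r' hr

theorem stdSteps_ctx (C : ECtx) {t t' : Tm} (h : Relation.ReflTransGen StdStep t t') :
    Relation.ReflTransGen StdStep (C.plug t) (C.plug t') := by
  induction h with
  | refl => exact Relation.ReflTransGen.refl
  | tail _ h2 ih => exact Relation.ReflTransGen.tail ih (h2.ctx C)

theorem IsAnswer.lift {t : Tm} (h : IsAnswer t) : ∀ n k, IsAnswer (Tm.lift n k t) := by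
  induction h with
  | lam b => intro n k; exact IsAnswer.lam _
  | app e ha ih =>
    intro n k
    simp only [Tm.lift]
    exact IsAnswer.app _ (ih n (k+1))

theorem IsAnswer.subst {t : Tm} (h : IsAnswer t) : ∀ u k, IsAnswer (Tm.subst t k u) := by
  induction h with
  | lam b => intro u k; exact IsAnswer.lam _
  | app e ha ih =>
    intro u k
    simp only [Tm.subst]
    exact IsAnswer.app _ (ih u (k+1))

end NeedCalc
namespace NeedCalc
open Tm

/-! ### Weighted parallel reduction -/

inductive ParN : Nat → Tm → Tm → Prop
  | bvar (i : Nat) : ParN 0 (.bvar i) (.bvar i)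
  | lam {s : Nat} {b b' : Tm} : ParN s b b' → ParN (s+1) (.lam b) (.lam b')
  | app {s₁ s₂ : Nat} {f f' a a' : Tm} : ParN s₁ f f' → ParN s₂ a a' →
      ParN (s₁+s₂+1) (.app f a) (.app f' a')
  | beta {s₁ s₂ : Nat} {body body' b b' : Tm} (hN : Needed body) :
      ParN s₁ body body' → ParN s₂ b b' →
      ParN (s₁ + occ 0 body' * (s₂ + 1) + 1)
        (.app (.lam body) (.lam b)) (Tm.subst body' 0 (.lam b'))
  | liftR {s₁ s₂ s₃ : Nat} {a₀ a₀' e₁ e₁' e₂ e₂' : Tm} (hA : IsAnswer a₀) :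
      ParN s₁ a₀ a₀' → ParN s₂ e₁ e₁' → ParN s₃ e₂ e₂' →
      ParN (s₁+s₂+s₃+4) (.app (.app (.lam a₀) e₁) e₂)
        (.app (.lam (.app a₀' (Tm.lift 1 0 e₂'))) e₁')
  | assoc {sE s₁ s₂ : Nat} {body body' a₀ a₀' e₁ e₁' : Tm}
      (hN : Needed body) (hA : IsAnswer a₀) :
      ParN sE body body' → ParN s₁ a₀ a₀' → ParN s₂ e₁ e₁' →
      ParN (sE+s₁+s₂+5) (.app (.lam body) (.app (.lam a₀) e₁))
        (.app (.lam (.app (Tm.lift 1 0 (.lam body')) a₀')) e₁')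

theorem parN_refl (t : Tm) : ∃ s, ParN s t t := by
  induction t with
  | bvar i => exact ⟨0, ParN.bvar i⟩
  | lam b ih => obtain ⟨s, h⟩ := ih; exact ⟨s+1, ParN.lam h⟩
  | app f a ihf iha =>
    obtain ⟨s₁, h₁⟩ := ihf
    obtain ⟨s₂, h₂⟩ := iha
    exact ⟨s₁+s₂+1, ParN.app h₁ h₂⟩

/-- Specialized rewriting lemmas -/
theorem lift_subst0 (A B : Tm) (n k : Nat) :
    lift n k (subst A 0 B) = subst (lift n (k+1) A) 0 (lift n k B) := by
  have := lift_subst A B n 0 k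
  simpa using this

theorem subst_subst0 (A B C : Tm) (k : Nat) :
    subst (subst A 0 B) k C = subst (subst A (k+1) C) 0 (subst B k C) := by
  have := subst_subst A B C 0 k
  simpa using this

theorem subst_lift10 (X C : Tm) (k : Nat) :
    subst (lift 1 0 X) (k+1) C = lift 1 0 (subst X k C) :=
  subst_lift X 1 0 k C (Nat.zero_le k)

theorem lift_lift10 (X : Tm) (n k : Nat) :
    lift n (k+1) (lift 1 0 X) = lift 1 0 (lift n k X) :=
  (lift_lift_comm X 1 n k 0 (Nat.zero_le k)).symm

theorem parN_lift {s : Nat} {t t' : Tm} (h : ParN s t t') :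
    ∀ n k, ParN s (lift n k t) (lift n k t') := by
  induction h with
  | bvar i =>
    intro n k
    simp only [Tm.lift]
    split_ifs <;> exact ParN.bvar _
  | lam h ih =>
    intro n k
    simp only [Tm.lift]
    exact ParN.lam (ih n (k+1))
  | app h1 h2 ih1 ih2 =>
    intro n k
    simp only [Tm.lift]
    exact ParN.app (ih1 n k) (ih2 n k)
  | @beta s₁ s₂ body body' b b' hN h1 h2 ih1 ih2 =>
    intro n k
    simp only [Tm.lift, lift_subst0]
    have node := ParN.beta (hN.lift n k) (ih1 n (k+1)) (ih2 n (k+1))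
    rw [occ_lift_lt body' n (k+1) 0 (by omega)] at node
    simpa only [Tm.lift] using node
  | @liftR s₁ s₂ s₃ a₀ a₀' e₁ e₁' e₂ e₂' hA h1 h2 h3 ih1 ih2 ih3 =>
    intro n k
    simp only [Tm.lift]
    have node := ParN.liftR (hA.lift n (k+1)) (ih1 n (k+1)) (ih2 n k) (ih3 n k)
    rw [← lift_lift10 e₂' n k] at node
    exact node
  | @assoc sE s₁ s₂ body body' a₀ a₀' e₁ e₁' hN hA h1 h2 h3 ih1 ih2 ih3 =>
    intro n k
    simp only [Tm.lift]
    have node := ParN.assoc (hN.lift n k) (hA.lift n (k+1)) (ih1 n (k+1)) (ih2 n (k+1)) (ih3 n k)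
    have e : Tm.lift 1 0 (Tm.lam (lift n (k+1) body')) = lift n (k+1) (Tm.lift 1 0 (.lam body')) := by
      rw [lift_lift10 (Tm.lam body') n k]
      simp only [Tm.lift]
    rw [e] at node
    exact node

theorem parN_subst {s₁ : Nat} {t t' : Tm} (h : ParN s₁ t t') :
    ∀ {s₂ : Nat} {u u' : Tm} (j : Nat), ParN s₂ u u' →
    ∃ m, ParN m (subst t j u) (subst t' j u') ∧ m ≤ s₁ + occ j t' * s₂ := by
  induction h with
  | bvar i =>
    intro s₂ u u' j hu
    rcases Nat.lt_trichotomy i j with h1 | h1 | h1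
    · rw [subst_bvar_lt u h1, subst_bvar_lt u' h1]
      exact ⟨0, ParN.bvar i, by omega⟩
    · subst h1
      rw [subst_bvar_self, subst_bvar_self, occ_bvar_eq rfl]
      exact ⟨s₂, parN_lift hu i 0, by omega⟩
    · rw [subst_bvar_gt u h1, subst_bvar_gt u' h1]
      exact ⟨0, ParN.bvar _, by omega⟩
  | @lam s b b' h ih =>
    intro s₂ u u' j hu
    obtain ⟨m, hm, hb⟩ := ih (j+1) hu
    refine ⟨m+1, ParN.lam hm, ?_⟩
    simp only [occ]
    omega
  | @app sf sa f f' a a' h1 h2 ih1 ih2 =>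
    intro s₂ u u' j hu
    obtain ⟨m₁, hm₁, hb₁⟩ := ih1 j hu
    obtain ⟨m₂, hm₂, hb₂⟩ := ih2 j hu
    refine ⟨m₁+m₂+1, ParN.app hm₁ hm₂, ?_⟩
    simp only [occ]
    have : (occ j f' + occ j a') * s₂ = occ j f' * s₂ + occ j a' * s₂ := by ring
    omega
  | @beta sb sc body body' b b' hN h1 h2 ih1 ih2 =>
    intro s₂ u u' j hu
    obtain ⟨m₁, hm₁, hb₁⟩ := ih1 (j+1) hu
    obtain ⟨m₂, hm₂, hb₂⟩ := ih2 (j+1) hu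
    have node := ParN.beta (hN.subst u j) hm₁ hm₂
    rw [occ_subst_lt body' u' (j+1) 0 (by omega)] at node
    have eb : Tm.lam (subst b' (j+1) u') = subst (Tm.lam b') j u' := by
      simp only [Tm.subst]
    rw [eb, ← subst_subst0 body' (.lam b') u' j] at node
    refine ⟨_, by simpa only [Tm.subst] using node, ?_⟩
    -- size bound
    have hocc : occ j (subst body' 0 (Tm.lam b')) =
        occ (j+1) body' + occ 0 body' * occ (j+1) b' := by
      have := occ_subst body' (.lam b') 0 j
      simpa only [Nat.zero_add, occ] using this
    rw [hocc]
    set ob := occ (j+1) body'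
    set oc := occ (j+1) b'
    set mu := occ 0 body'
    calc m₁ + mu * (m₂ + 1) + 1
        ≤ (sb + ob * s₂) + mu * ((sc + oc * s₂) + 1) + 1 := by
          have := Nat.mul_le_mul_left mu (Nat.add_le_add hb₂ (le_refl 1))
          omega
      _ = sb + mu * (sc + 1) + 1 + (ob + mu * oc) * s₂ := by ring
  | @liftR s₁' s₂' s₃' a₀ a₀' e₁ e₁' e₂ e₂' hA h1 h2 h3 ih1 ih2 ih3 =>
    intro s₂ u u' j hu
    obtain ⟨m₁, hm₁, hb₁⟩ := ih1 (j+1) hu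
    obtain ⟨m₂, hm₂, hb₂⟩ := ih2 j hu
    obtain ⟨m₃, hm₃, hb₃⟩ := ih3 j hu
    have node := ParN.liftR (hA.subst u (j+1)) hm₁ hm₂ hm₃
    rw [← subst_lift10 e₂' u' j] at node
    refine ⟨_, by simpa only [Tm.subst] using node, ?_⟩
    simp only [occ]
    rw [occ_lift_ge e₂' 1 0 j (by omega)]
    set o₁ := occ (j+1) a₀'
    set o₂ := occ j e₁'
    set o₃ := occ j e₂'
    calc m₁ + m₂ + m₃ + 4
        ≤ (s₁' + o₁ * s₂) + (s₂' + o₂ * s₂) + (s₃' + o₃ * s₂) + 4 := by omega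
      _ = s₁' + s₂' + s₃' + 4 + (o₁ + o₃ + o₂) * s₂ := by ring
  | @assoc sE s₁' s₂' body body' a₀ a₀' e₁ e₁' hN hA h1 h2 h3 ih1 ih2 ih3 =>
    intro s₂ u u' j hu
    obtain ⟨mE, hmE, hbE⟩ := ih1 (j+1) hu
    obtain ⟨m₁, hm₁, hb₁⟩ := ih2 (j+1) hu
    obtain ⟨m₂, hm₂, hb₂⟩ := ih3 j hu
    have node := ParN.assoc (hN.subst u j) (hA.subst u (j+1)) hmE hm₁ hm₂
    have e : Tm.lift 1 0 (Tm.lam (subst body' (j+1) u')) =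
        subst (Tm.lift 1 0 (.lam body')) (j+1) u' := by
      rw [subst_lift10 (.lam body') u' j]
      simp only [Tm.subst]
    rw [e] at node
    refine ⟨_, by simpa only [Tm.subst] using node, ?_⟩
    simp only [occ, Nat.zero_add, Tm.lift]
    rw [show occ (j+1+1) (lift 1 1 body') = occ (j+1) body' from
      occ_lift_ge body' 1 1 (j+1) (by omega)]
    set oE := occ (j+1) body'
    set o₁ := occ (j+1) a₀'
    set o₂ := occ j e₁'
    calc mE + m₁ + m₂ + 5
        ≤ (sE + oE * s₂) + (s₁' + o₁ * s₂) + (s₂' + o₂ * s₂) + 5 := by omega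
      _ = sE + s₁' + s₂' + 5 + (oE + o₁ + o₂) * s₂ := by ring
end NeedCalc
namespace NeedCalc
open Tm

abbrev Stds := Relation.ReflTransGen StdStep

theorem stdStep_root {r r' : Tm} (h : Redn r r') : StdStep r r' :=
  StdStep.mk .hole r r' h

theorem stdSteps_appL {t t' : Tm} (e : Tm) (h : Stds t t') :
    Stds (.app t e) (.app t' e) :=
  stdSteps_ctx (ECtx.appL .hole e) h

theorem stdSteps_appBody {t t' : Tm} (e : Tm) (h : Stds t t') :
    Stds (.app (.lam t) e) (.app (.lam t') e) :=
  stdSteps_ctx (ECtx.appBody .hole e) h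

theorem stdSteps_appNeed (G : ECtx) {t t' : Tm} (h : Stds t t') :
    Stds (.app (.lam (G.plug (.bvar G.depth))) t) (.app (.lam (G.plug (.bvar G.depth))) t') :=
  stdSteps_ctx (ECtx.appNeed G .hole) h

/-- Unfolding a root parallel β-redex into a standard step plus a smaller parallel step. -/
theorem unfold_beta {s₁ s₂ : Nat} {body body' b b' : Tm} (hN : Needed body)
    (h1 : ParN s₁ body body') (h2 : ParN s₂ b b') :
    StdStep (.app (.lam body) (.lam b)) (subst body 0 (.lam b)) ∧
    ∃ m, ParN m (subst body 0 (.lam b)) (subst body' 0 (.lam b')) ∧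
      m < s₁ + occ 0 body' * (s₂ + 1) + 1 := by
  constructor
  · obtain ⟨E, rfl⟩ := hN
    exact stdStep_root (Redn.beta E b)
  · obtain ⟨m, hm, hb⟩ := parN_subst h1 0 (ParN.lam h2)
    exact ⟨m, hm, by omega⟩

theorem unfold_liftR {s₁ s₂ s₃ : Nat} {a₀ a₀' e₁ e₁' e₂ e₂' : Tm} (hA : IsAnswer a₀)
    (h1 : ParN s₁ a₀ a₀') (h2 : ParN s₂ e₁ e₁') (h3 : ParN s₃ e₂ e₂') :
    StdStep (.app (.app (.lam a₀) e₁) e₂) (.app (.lam (.app a₀ (Tm.lift 1 0 e₂))) e₁) ∧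
    ∃ m, ParN m (.app (.lam (.app a₀ (Tm.lift 1 0 e₂))) e₁)
        (.app (.lam (.app a₀' (Tm.lift 1 0 e₂'))) e₁') ∧ m < s₁+s₂+s₃+4 := by
  refine ⟨stdStep_root (Redn.liftR e₁ e₂ hA), ?_⟩
  exact ⟨_, ParN.app (ParN.lam (ParN.app h1 (parN_lift h3 1 0))) h2, by omega⟩

theorem unfold_assoc {sE s₁ s₂ : Nat} {body body' a₀ a₀' e₁ e₁' : Tm}
    (hN : Needed body) (hA : IsAnswer a₀)
    (h1 : ParN sE body body') (h2 : ParN s₁ a₀ a₀') (h3 : ParN s₂ e₁ e₁') :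
    StdStep (.app (.lam body) (.app (.lam a₀) e₁))
      (.app (.lam (.app (Tm.lift 1 0 (.lam body)) a₀)) e₁) ∧
    ∃ m, ParN m (.app (.lam (.app (Tm.lift 1 0 (.lam body)) a₀)) e₁)
        (.app (.lam (.app (Tm.lift 1 0 (.lam body')) a₀')) e₁') ∧ m < sE+s₁+s₂+5 := by
  constructor
  · obtain ⟨E, rfl⟩ := hN
    exact stdStep_root (Redn.assoc E e₁ hA)
  · exact ⟨_, ParN.app (ParN.lam (ParN.app (parN_lift (ParN.lam h1) 1 0) h2)) h3, by omega⟩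

/-- Inversion: a parallel reduction to a λ-abstraction. -/
theorem lam_par : ∀ s, ∀ {f T : Tm}, ParN s f T → ∀ {c : Tm}, T = .lam c →
    ∃ c₀ s', Stds f (.lam c₀) ∧ ParN s' c₀ c ∧ s' < s := by
  intro s
  induction s using Nat.strong_induction_on with
  | _ s ih =>
    intro f T h
    cases h with
    | bvar i => intro c hT; exact absurd hT (by simp)
    | @lam sb b b' hb =>
      intro c hT
      obtain rfl : b' = c := by injection hT
      exact ⟨b, sb, Relation.ReflTransGen.refl, hb, by omega⟩
    | app h1 h2 => intro c hT; exact absurd hT (by simp)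
    | @beta s₁ s₂ body body' b b' hN h1 h2 =>
      intro c hT
      obtain ⟨hstd, m, hm, hlt⟩ := unfold_beta hN h1 h2
      rw [hT] at hm
      obtain ⟨c₀, s', hsteps, hc, hs'⟩ := ih m hlt hm rfl
      exact ⟨c₀, s', Relation.ReflTransGen.head hstd hsteps, hc, by omega⟩
    | liftR hA h1 h2 h3 => intro c hT; exact absurd hT (by simp)
    | assoc hN hA h1 h2 h3 => intro c hT; exact absurd hT (by simp)

/-- Inversion: a parallel reduction to an application. -/
theorem app_par : ∀ s, ∀ {f T : Tm}, ParN s f T → ∀ {X Y : Tm}, T = .app X Y →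
    ∃ g h s₁ s₂, Stds f (.app g h) ∧ ParN s₁ g X ∧ ParN s₂ h Y := by
  intro s
  induction s using Nat.strong_induction_on with
  | _ s ih =>
    intro f T h
    cases h with
    | bvar i => intro X Y hT; exact absurd hT (by simp)
    | lam hb => intro X Y hT; exact absurd hT (by simp)
    | @app s₁ s₂ f₀ f' a a' h1 h2 =>
      intro X Y hT
      obtain ⟨rfl, rfl⟩ : f' = X ∧ a' = Y := by
        constructor <;> injection hT
      exact ⟨f₀, a, s₁, s₂, Relation.ReflTransGen.refl, h1, h2⟩
    | @beta s₁ s₂ body body' b b' hN h1 h2 =>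
      intro X Y hT
      obtain ⟨hstd, m, hm, hlt⟩ := unfold_beta hN h1 h2
      rw [hT] at hm
      obtain ⟨g, h', s₁', s₂', hsteps, hg, hh⟩ := ih m hlt hm rfl
      exact ⟨g, h', s₁', s₂', Relation.ReflTransGen.head hstd hsteps, hg, hh⟩
    | @liftR s₁ s₂ s₃ a₀ a₀' e₁ e₁' e₂ e₂' hA h1 h2 h3 =>
      intro X Y hT
      obtain ⟨hstd, m, hm, hlt⟩ := unfold_liftR hA h1 h2 h3
      rw [hT] at hm
      obtain ⟨g, h', s₁', s₂', hsteps, hg, hh⟩ := ih m hlt hm rfl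
      exact ⟨g, h', s₁', s₂', Relation.ReflTransGen.head hstd hsteps, hg, hh⟩
    | @assoc sE s₁ s₂ body body' a₀ a₀' e₁ e₁' hN hA h1 h2 h3 =>
      intro X Y hT
      obtain ⟨hstd, m, hm, hlt⟩ := unfold_assoc hN hA h1 h2 h3
      rw [hT] at hm
      obtain ⟨g, h', s₁', s₂', hsteps, hg, hh⟩ := ih m hlt hm rfl
      exact ⟨g, h', s₁', s₂', Relation.ReflTransGen.head hstd hsteps, hg, hh⟩

end NeedCalc
namespace NeedCalc
open Tm

/-- Inversion: a parallel reduction to a term with a needed variable. -/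
theorem need_par : ∀ s, ∀ {c T : Tm}, ParN s c T → ∀ (F : ECtx) (k : Nat),
    T = F.plug (.bvar (F.depth + k)) →
    ∃ G : ECtx, Stds c (G.plug (.bvar (G.depth + k))) ∧
      ∃ s', ParN s' (G.plug (.bvar (G.depth + k))) T := by
  intro s
  induction s using Nat.strong_induction_on with
  | _ s ih =>
    intro c T h
    cases h with
    | bvar i =>
      intro F k hT
      cases F with
      | hole =>
        simp only [ECtx.plug, ECtx.depth, Nat.zero_add, Tm.bvar.injEq] at hT
        subst hT
        refine ⟨.hole, ?_, 0, ?_⟩ <;> simp only [ECtx.plug, ECtx.depth, Nat.zero_add]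
        · exact Relation.ReflTransGen.refl
        · exact ParN.bvar _
      | appL F₁ q => simp [ECtx.plug] at hT
      | appNeed B F₁ => simp [ECtx.plug] at hT
      | appBody F₁ q => simp [ECtx.plug] at hT
    | lam hb =>
      intro F k hT
      cases F with
      | hole => simp [ECtx.plug] at hT
      | appL F₁ q => simp [ECtx.plug] at hT
      | appNeed B F₁ => simp [ECtx.plug] at hT
      | appBody F₁ q => simp [ECtx.plug] at hT
    | @app s₁ s₂ f f' a a' h1 h2 =>
      intro F k hT
      cases F with
      | hole => simp [ECtx.plug] at hT
      | appL F₁ q =>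
        simp only [ECtx.plug, ECtx.depth] at hT
        injection hT with hf' ha'
        obtain ⟨G₁, steps, s', link⟩ := ih s₁ (by omega) h1 F₁ k hf'
        subst ha'
        refine ⟨.appL G₁ a, stdSteps_appL a steps, s' + s₂ + 1, ?_⟩
        simp only [ECtx.plug, ECtx.depth]
        exact ParN.app link h2
      | appNeed B F₁ =>
        simp only [ECtx.plug, ECtx.depth] at hT
        injection hT with hf' ha'
        obtain ⟨c₁, sc, steps_f, hc₁, hsc⟩ := lam_par s₁ h1 hf'
        obtain ⟨G₁, steps_c, sG, linkB⟩ := ih sc (by omega) hc₁ B 0 rfl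
        obtain ⟨G₂, steps_a, sA, linkA⟩ := ih s₂ (by omega) h2 F₁ k ha'
        refine ⟨.appNeed G₁ G₂, ?_, sG + 1 + sA + 1, ?_⟩
        · simp only [ECtx.plug, ECtx.depth]
          have t1 := stdSteps_appL a steps_f
          have t2 := stdSteps_appBody a steps_c
          have t3 := stdSteps_appNeed G₁ steps_a
          exact (t1.trans t2).trans t3
        · simp only [ECtx.plug, ECtx.depth]
          rw [hf']
          exact ParN.app (ParN.lam linkB) linkA
      | appBody F₁ q =>
        simp only [ECtx.plug, ECtx.depth] at hT
        injection hT with hf' ha'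
        obtain ⟨c₁, sc, steps_f, hc₁, hsc⟩ := lam_par s₁ h1 hf'
        have harr : F₁.plug (.bvar (F₁.depth + 1 + k)) = F₁.plug (.bvar (F₁.depth + (k+1))) := by
          rw [show F₁.depth + 1 + k = F₁.depth + (k+1) by omega]
        obtain ⟨G₁, steps_c, sG, linkB⟩ := ih sc (by omega) hc₁ F₁ (k+1) harr
        subst ha'
        refine ⟨.appBody G₁ a, ?_, sG + 1 + s₂ + 1, ?_⟩
        · simp only [ECtx.plug, ECtx.depth]
          have t1 := stdSteps_appL a steps_f
          have t2 := stdSteps_appBody a steps_c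
          rw [show G₁.depth + 1 + k = G₁.depth + (k+1) by omega]
          exact t1.trans t2
        · simp only [ECtx.plug, ECtx.depth]
          rw [hf', show G₁.depth + 1 + k = G₁.depth + (k+1) by omega]
          exact ParN.app (ParN.lam linkB) h2
    | @beta s₁ s₂ body body' b b' hN h1 h2 =>
      intro F k hT
      obtain ⟨hstd, m, hm, hlt⟩ := unfold_beta hN h1 h2
      rw [hT] at hm
      obtain ⟨G, steps, s', link⟩ := ih m (by omega) hm F k rfl
      exact ⟨G, Relation.ReflTransGen.head hstd steps, s', by rw [← hT] at link; exact link⟩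
    | @liftR s₁ s₂ s₃ a₀ a₀' e₁ e₁' e₂ e₂' hA h1 h2 h3 =>
      intro F k hT
      obtain ⟨hstd, m, hm, hlt⟩ := unfold_liftR hA h1 h2 h3
      rw [hT] at hm
      obtain ⟨G, steps, s', link⟩ := ih m (by omega) hm F k rfl
      exact ⟨G, Relation.ReflTransGen.head hstd steps, s', by rw [← hT] at link; exact link⟩
    | @assoc sE s₁ s₂ body body' a₀ a₀' e₁ e₁' hN hA h1 h2 h3 =>
      intro F k hT
      obtain ⟨hstd, m, hm, hlt⟩ := unfold_assoc hN hA h1 h2 h3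
      rw [hT] at hm
      obtain ⟨G, steps, s', link⟩ := ih m (by omega) hm F k rfl
      exact ⟨G, Relation.ReflTransGen.head hstd steps, s', by rw [← hT] at link; exact link⟩

end NeedCalc
namespace NeedCalc
open Tm

/-- Inversion: a parallel reduction to an answer. -/
theorem ans_par : ∀ {A : Tm}, IsAnswer A → ∀ s, ∀ {e T : Tm}, ParN s e T → T = A →
    ∃ A₀, Stds e A₀ ∧ IsAnswer A₀ ∧ ∃ s', ParN s' A₀ A := by
  intro A hA
  induction hA with
  | lam b =>
    intro s
    induction s using Nat.strong_induction_on with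
    | _ s ih =>
      intro e T h
      cases h with
      | bvar i => intro hT; exact absurd hT (by simp)
      | @lam sb b₀ b' hb =>
        intro hT
        exact ⟨.lam b₀, Relation.ReflTransGen.refl, IsAnswer.lam _, sb+1, hT ▸ ParN.lam hb⟩
      | app h1 h2 => intro hT; exact absurd hT (by simp)
      | beta hN h1 h2 =>
        intro hT
        obtain ⟨hstd, m, hm, hlt⟩ := unfold_beta hN h1 h2
        rw [hT] at hm
        obtain ⟨A₀, steps, ans, s', link⟩ := ih m hlt hm rfl
        exact ⟨A₀, Relation.ReflTransGen.head hstd steps, ans, s', link⟩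
      | liftR hA' h1 h2 h3 => intro hT; exact absurd hT (by simp)
      | assoc hN hA' h1 h2 h3 => intro hT; exact absurd hT (by simp)
  | @app a₀ e₀ ha₀ ihA =>
    intro s
    induction s using Nat.strong_induction_on with
    | _ s ih =>
      intro e T h
      cases h with
      | bvar i => intro hT; exact absurd hT (by simp)
      | lam hb => intro hT; exact absurd hT (by simp)
      | @app s₁ s₂ f f' a a' h1 h2 =>
        intro hT
        injection hT with hf' ha'
        obtain ⟨c, sc, steps_f, hc, hsc⟩ := lam_par s₁ h1 hf'
        obtain ⟨C, steps_c, ansC, s'', link⟩ := ihA sc hc rfl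
        refine ⟨.app (.lam C) a, ?_, IsAnswer.app a ansC, s''+1+s₂+1, ?_⟩
        · exact (stdSteps_appL a steps_f).trans (stdSteps_appBody a steps_c)
        · exact ParN.app (ParN.lam link) (ha' ▸ h2)
      | beta hN h1 h2 =>
        intro hT
        obtain ⟨hstd, m, hm, hlt⟩ := unfold_beta hN h1 h2
        rw [hT] at hm
        obtain ⟨A₀, steps, ans, s', link⟩ := ih m hlt hm rfl
        exact ⟨A₀, Relation.ReflTransGen.head hstd steps, ans, s', link⟩
      | liftR hA' h1 h2 h3 =>
        intro hT
        obtain ⟨hstd, m, hm, hlt⟩ := unfold_liftR hA' h1 h2 h3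
        rw [hT] at hm
        obtain ⟨A₀, steps, ans, s', link⟩ := ih m hlt hm rfl
        exact ⟨A₀, Relation.ReflTransGen.head hstd steps, ans, s', link⟩
      | assoc hN hA' h1 h2 h3 =>
        intro hT
        obtain ⟨hstd, m, hm, hlt⟩ := unfold_assoc hN hA' h1 h2 h3
        rw [hT] at hm
        obtain ⟨A₀, steps, ans, s', link⟩ := ih m hlt hm rfl
        exact ⟨A₀, Relation.ReflTransGen.head hstd steps, ans, s', link⟩

end NeedCalc
namespace NeedCalc
open Tm

theorem no_std_bvar {i : Nat} {t : Tm} (h : StdStep (.bvar i) t) : False := by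
  have key : ∀ u t₀ : Tm, StdStep u t₀ → u = .bvar i → False := by
    intro u t₀ h₀
    cases h₀ with
    | mk E r r' hr =>
      intro hu
      cases E with
      | hole =>
        simp only [ECtx.plug] at hu
        subst hu
        cases hr
      | appL E₁ q => simp [ECtx.plug] at hu
      | appNeed B E₁ => simp [ECtx.plug] at hu
      | appBody E₁ q => simp [ECtx.plug] at hu
  exact key _ _ h rfl

theorem no_std_lam {b : Tm} {t : Tm} (h : StdStep (.lam b) t) : False := by
  have key : ∀ u t₀ : Tm, StdStep u t₀ → u = .lam b → False := by
    intro u t₀ h₀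
    cases h₀ with
    | mk E r r' hr =>
      intro hu
      cases E with
      | hole =>
        simp only [ECtx.plug] at hu
        subst hu
        cases hr
      | appL E₁ q => simp [ECtx.plug] at hu
      | appNeed B E₁ => simp [ECtx.plug] at hu
      | appBody E₁ q => simp [ECtx.plug] at hu
  exact key _ _ h rfl

/-- Inversion of a standard step out of an application. -/
theorem std_inv_app : ∀ {u t : Tm}, StdStep u t → ∀ {f a : Tm}, u = .app f a →
    (Redn (.app f a) t) ∨
    (∃ (E₁ : ECtx) (r r' : Tm), Redn r r' ∧ f = E₁.plug r ∧ t = .app (E₁.plug r') a) ∨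
    (∃ (B E₁ : ECtx) (r r' : Tm), Redn r r' ∧ f = .lam (ECtx.plug B (.bvar B.depth)) ∧ a = E₁.plug r ∧
        t = .app f (E₁.plug r')) ∨
    (∃ (E₁ : ECtx) (r r' : Tm), Redn r r' ∧ f = .lam (E₁.plug r) ∧ t = .app (.lam (E₁.plug r')) a) := by
  intro u t h
  cases h with
  | mk E r r' hr =>
    intro f a hu
    cases E with
    | hole =>
      simp only [ECtx.plug] at hu ⊢
      exact Or.inl (hu ▸ hr)
    | appL E₁ q =>
      simp only [ECtx.plug] at hu ⊢
      injection hu with h1 h2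
      subst h2
      exact Or.inr (Or.inl ⟨E₁, r, r', hr, h1.symm, rfl⟩)
    | appNeed B E₁ =>
      simp only [ECtx.plug] at hu ⊢
      injection hu with h1 h2
      subst h1
      exact Or.inr (Or.inr (Or.inl ⟨B, E₁, r, r', hr, rfl, h2.symm, rfl⟩))
    | appBody E₁ q =>
      simp only [ECtx.plug] at hu ⊢
      injection hu with h1 h2
      subst h2
      exact Or.inr (Or.inr (Or.inr ⟨E₁, r, r', hr, h1.symm, rfl⟩))

/-- The central swap lemma: a parallel step followed by a standard step can be
    reorganised into standard steps followed by a parallel step. -/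
theorem swap_par : ∀ s, ∀ {e e₁ : Tm}, ParN s e e₁ → ∀ {e₂ : Tm}, StdStep e₁ e₂ →
    ∃ e₃, Stds e e₃ ∧ ∃ s', ParN s' e₃ e₂ := by
  intro s
  induction s using Nat.strong_induction_on with
  | _ s ih =>
    intro e e₁ h
    cases h with
    | bvar i => intro e₂ hstd; exact absurd hstd (fun h => no_std_bvar h)
    | lam hb => intro e₂ hstd; exact absurd hstd (fun h => no_std_lam h)
    | @beta s₁ s₂ body body' b b' hN h1 h2 =>
      intro e₂ hstd
      obtain ⟨hstd0, m, hm, hlt⟩ := unfold_beta hN h1 h2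
      obtain ⟨e₃, steps, s', link⟩ := ih m (by omega) hm hstd
      exact ⟨e₃, Relation.ReflTransGen.head hstd0 steps, s', link⟩
    | @liftR s₁ s₂ s₃ a₀ a₀' e₁' e₁'' e₂' e₂'' hA h1 h2 h3 =>
      intro e₂ hstd
      obtain ⟨hstd0, m, hm, hlt⟩ := unfold_liftR hA h1 h2 h3
      obtain ⟨e₃, steps, s', link⟩ := ih m (by omega) hm hstd
      exact ⟨e₃, Relation.ReflTransGen.head hstd0 steps, s', link⟩
    | @assoc sE s₁ s₂ body body' a₀ a₀' eA eA' hN hA h1 h2 h3 =>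
      intro e₂ hstd
      obtain ⟨hstd0, m, hm, hlt⟩ := unfold_assoc hN hA h1 h2 h3
      obtain ⟨e₃, steps, s', link⟩ := ih m (by omega) hm hstd
      exact ⟨e₃, Relation.ReflTransGen.head hstd0 steps, s', link⟩
    | @app s₁ s₂ f f' a a' h1 h2 =>
      intro e₂ hstd
      rcases std_inv_app hstd rfl with hred | ⟨E₁, r, r', hr, hfeq, rfl⟩ |
        ⟨B, E₁, r, r', hr, hfeq, haeq, rfl⟩ | ⟨E₁, r, r', hr, hfeq, rfl⟩
      · -- the standard redex is the whole application
        cases hred with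
        | beta F b₁ =>
          obtain ⟨c, sc, steps_f, hc, hsc⟩ := lam_par s₁ h1 rfl
          obtain ⟨G, steps_c, sG, linkB⟩ := need_par sc hc F 0 rfl
          obtain ⟨d, sd, steps_a, hd, hsd⟩ := lam_par s₂ h2 rfl
          refine ⟨subst (G.plug (.bvar G.depth)) 0 (.lam d), ?_, ?_⟩
          · have t1 := stdSteps_appL a steps_f
            have t2 := stdSteps_appBody a steps_c
            have t3 := stdSteps_appNeed G steps_a
            have t4 : StdStep (.app (.lam (G.plug (.bvar G.depth))) (.lam d))
                (subst (G.plug (.bvar G.depth)) 0 (.lam d)) := stdStep_root (Redn.beta G d)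
            exact ((t1.trans t2).trans t3).trans (Relation.ReflTransGen.single t4)
          · obtain ⟨m, hm, _⟩ := parN_subst linkB 0 (ParN.lam hd)
            exact ⟨m, hm⟩
        | @liftR aV eA eB haV =>
          -- f' = app (lam aV) eA, a' = eB, target: app (lam (app aV (lift 1 0 eB))) eA
          obtain ⟨g, h', sg, sh, steps_f, hg, hh⟩ := app_par s₁ h1 rfl
          obtain ⟨cgl, scg, steps_g, hcg, _⟩ := lam_par sg hg rfl
          obtain ⟨C, steps_C, ansC, sC, linkC⟩ := ans_par haV scg hcg rfl
          refine ⟨.app (.lam (.app C (Tm.lift 1 0 a))) h', ?_, ?_⟩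
          · have t1 := stdSteps_appL a steps_f
            have t2 := stdSteps_appL a (stdSteps_appL h' steps_g)
            have t3 := stdSteps_appL a (stdSteps_appBody h' steps_C)
            have t4 : StdStep (.app (.app (.lam C) h') a)
                (.app (.lam (.app C (Tm.lift 1 0 a))) h') :=
              stdStep_root (Redn.liftR h' a ansC)
            exact ((t1.trans t2).trans t3).trans (Relation.ReflTransGen.single t4)
          · exact ⟨_, ParN.app (ParN.lam (ParN.app linkC (parN_lift h2 1 0))) hh⟩
        | @assoc F aV eA haV =>
          -- f' = lam (F.plug var), a' = app (lam aV) eA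
          obtain ⟨c, sc, steps_f, hc, hsc⟩ := lam_par s₁ h1 rfl
          obtain ⟨G, steps_c, sG, linkB⟩ := need_par sc hc F 0 rfl
          obtain ⟨g, h', sg, sh, steps_a, hg, hh⟩ := app_par s₂ h2 rfl
          obtain ⟨dgl, sdg, steps_g, hdg, _⟩ := lam_par sg hg rfl
          obtain ⟨D, steps_D, ansD, sD, linkD⟩ := ans_par haV sdg hdg rfl
          refine ⟨.app (.lam (.app (Tm.lift 1 0 (.lam (G.plug (.bvar G.depth)))) D)) h', ?_, ?_⟩
          · have t1 := stdSteps_appL a steps_f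
            have t2 := stdSteps_appBody a steps_c
            have t3 := stdSteps_appNeed G steps_a
            have t4 := stdSteps_appNeed G (stdSteps_appL h' steps_g)
            have t5 := stdSteps_appNeed G (stdSteps_appBody h' steps_D)
            have t6 : StdStep (.app (.lam (G.plug (.bvar G.depth))) (.app (.lam D) h'))
                (.app (.lam (.app (Tm.lift 1 0 (.lam (G.plug (.bvar G.depth)))) D)) h') :=
              stdStep_root (Redn.assoc G h' ansD)
            exact ((((t1.trans t2).trans t3).trans t4).trans t5).trans
              (Relation.ReflTransGen.single t6)
          · exact ⟨_, ParN.app (ParN.lam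
              (ParN.app (parN_lift (ParN.lam linkB) 1 0) linkD)) hh⟩
      · -- standard redex inside the function part
        obtain ⟨f₃, steps, s', link⟩ := ih s₁ (by omega) h1 (hfeq ▸ StdStep.mk E₁ r r' hr)
        exact ⟨.app f₃ a, stdSteps_appL a steps, s' + s₂ + 1, ParN.app link h2⟩
      · -- standard redex inside the needed argument
        obtain ⟨c, sc, steps_f, hc, hsc⟩ := lam_par s₁ h1 hfeq
        obtain ⟨G, steps_c, sG, linkB⟩ := need_par sc hc B 0 rfl
        obtain ⟨a₃, steps_a3, s₃, linkA⟩ := ih s₂ (by omega) h2 (haeq ▸ StdStep.mk E₁ r r' hr)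
        refine ⟨.app (.lam (G.plug (.bvar G.depth))) a₃, ?_, ?_⟩
        · have t1 := stdSteps_appL a steps_f
          have t2 := stdSteps_appBody a steps_c
          have t3 := stdSteps_appNeed G steps_a3
          exact (t1.trans t2).trans t3
        · rw [hfeq]
          exact ⟨_, ParN.app (ParN.lam linkB) linkA⟩
      · -- standard redex inside the λ-body of the function
        obtain ⟨c, sc, steps_f, hc, hsc⟩ := lam_par s₁ h1 hfeq
        obtain ⟨c₃, steps_c3, s₃, linkC⟩ := ih sc (by omega) hc (StdStep.mk E₁ r r' hr)
        refine ⟨.app (.lam c₃) a, ?_, ?_⟩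
        · exact (stdSteps_appL a steps_f).trans (stdSteps_appBody a steps_c3)
        · exact ⟨_, ParN.app (ParN.lam linkC) h2⟩

end NeedCalc
namespace NeedCalc
open Tm

theorem par_ev : ∀ {T a' : Tm}, Stds T a' → IsAnswer a' →
    ∀ {s : Nat} {e : Tm}, ParN s e T → ∃ A, Stds e A ∧ IsAnswer A := by
  intro T a' hs ha
  induction hs using Relation.ReflTransGen.head_induction_on with
  | refl =>
    intro s e hp
    obtain ⟨A₀, st, ans, _⟩ := ans_par ha s hp rfl
    exact ⟨A₀, st, ans⟩
  | head hstep rest ihp =>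
    intro s e hp
    obtain ⟨e₃, steps, s', link⟩ := swap_par s hp hstep
    obtain ⟨A, stA, ansA⟩ := ihp link
    exact ⟨A, steps.trans stA, ansA⟩

theorem red1_parN : ∀ {t t' : Tm}, Red1 t t' → ∃ s, ParN s t t' := by
  intro t t' h
  induction h with
  | base hr =>
    cases hr with
    | beta E b =>
      obtain ⟨s₁, hb⟩ := parN_refl (E.plug (.bvar E.depth))
      obtain ⟨s₂, hb2⟩ := parN_refl b
      exact ⟨_, ParN.beta ⟨E, rfl⟩ hb hb2⟩
    | liftR e e' ha =>
      obtain ⟨s₁, h1⟩ := parN_refl _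
      obtain ⟨s₂, h2⟩ := parN_refl e
      obtain ⟨s₃, h3⟩ := parN_refl e'
      exact ⟨_, ParN.liftR ha h1 h2 h3⟩
    | assoc E e ha =>
      obtain ⟨sE, hE⟩ := parN_refl (E.plug (.bvar E.depth))
      obtain ⟨s₁, h1⟩ := parN_refl _
      obtain ⟨s₂, h2⟩ := parN_refl e
      exact ⟨_, ParN.assoc ⟨E, rfl⟩ ha hE h1 h2⟩
  | lam _ ih =>
    obtain ⟨s, hp⟩ := ih
    exact ⟨s+1, ParN.lam hp⟩
  | appL a _ ih =>
    obtain ⟨s, hp⟩ := ih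
    obtain ⟨s₂, h2⟩ := parN_refl a
    exact ⟨_, ParN.app hp h2⟩
  | appR f _ ih =>
    obtain ⟨s, hp⟩ := ih
    obtain ⟨s₁, h1⟩ := parN_refl f
    exact ⟨_, ParN.app h1 hp⟩

end NeedCalc

namespace NeedCalc

/-- a Curry–Feys-style standard reduction theorem for the
    revised call-by-need λ-calculus: if a term reduces to an answer by
    arbitrary reductions, the standard reduction sequence also reaches an
    answer. -/
theorem standard_reduction (e a : Tm) (h : Reds e a) (ha : IsAnswer a) :
    ∃ a', Relation.ReflTransGen StdStep e a' ∧ IsAnswer a' := by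
  induction h using Relation.ReflTransGen.head_induction_on with
  | refl => exact ⟨a, Relation.ReflTransGen.refl, ha⟩
  | head hstep rest ih =>
    obtain ⟨s, hp⟩ := red1_parN hstep
    obtain ⟨a', hs', ha'⟩ := ih
    exact par_ev hs' ha' hp

end NeedCalc
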